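/- Let P(z) = (1/80640)·(40320 + 945·6^{7/9}·35^{8/9}·z − 5040·6^{1/3}·35^{2/3}·z³ + 3024·6^{8/9}·35^{4/9}·z⁵ − 5760·6^{4/9}·35^{2/9}·z⁷ + 4480·z⁹), a degree-9 polynomial with real coefficients, and let β = (315/128)^{1/9} > 0, so that −β is the unique real root of 315 + 128z⁹ = 0. Then P′(z) = (1/2)·(z² − β²)⁴, P(β) = 1 and P(−β) = 0. In particular P is a Belyi polynomial with exactly two critical points ±β, each a zero of P′ of order 4, with critical values 1 and 0 respectively. -/

import Mathlib

noncomputable section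

/-- `β = (315/128)^{1/9}`. -/
def β : ℝ := ((315 : ℝ) / 128) ^ ((1 : ℝ) / 9)

/-- The normalized Belyi polynomial `(B̄₉⁴(z)+1)/2`. -/
def P : ℂ → ℂ := fun z =>
  (1 / 80640) * (40320
    + ((945 * (6 : ℝ) ^ ((7 : ℝ) / 9) * (35 : ℝ) ^ ((8 : ℝ) / 9) : ℝ) : ℂ) * z
    - ((5040 * (6 : ℝ) ^ ((1 : ℝ) / 3) * (35 : ℝ) ^ ((2 : ℝ) / 3) : ℝ) : ℂ) * z ^ 3
    + ((3024 * (6 : ℝ) ^ ((8 : ℝ) / 9) * (35 : ℝ) ^ ((4 : ℝ) / 9) : ℝ) : ℂ) * z ^ 5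
    - ((5760 * (6 : ℝ) ^ ((4 : ℝ) / 9) * (35 : ℝ) ^ ((2 : ℝ) / 9) : ℝ) : ℂ) * z ^ 7
    + 4480 * z ^ 9)

namespace Stmt18Aux

lemma hβpos : 0 < β := Real.rpow_pos_of_pos (by norm_num) _

lemma rp {x : ℝ} (hx : 0 ≤ x) {a : ℝ} {b : ℕ} (h : a * 9 = b) :
    (x ^ a) ^ (9 : ℕ) = x ^ b := by
  rw [← Real.rpow_natCast (x ^ a) 9, ← Real.rpow_mul hx,
    show a * ((9 : ℕ) : ℝ) = (b : ℕ) by push_cast; linarith [h]]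
  exact Real.rpow_natCast x b

lemma hβ9 : β ^ 9 = 315 / 128 := by
  have := rp (x := (315:ℝ)/128) (by norm_num) (a := (1:ℝ)/9) (b := 1) (by norm_num)
  simpa [β] using this

lemma pow9_inj {x y : ℝ} (h : x ^ 9 = y ^ 9) : x = y :=
  (Odd.strictMono_pow (R := ℝ) ⟨4, by norm_num⟩).injective h

lemma hc1 : 945 * (6:ℝ) ^ ((7:ℝ)/9) * (35:ℝ) ^ ((8:ℝ)/9) = 40320 * β ^ 8 := by
  apply pow9_inj
  rw [mul_pow, mul_pow, mul_pow, rp (by norm_num) (show (7:ℝ)/9*9 = (7:ℕ) by norm_num),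
    rp (by norm_num) (show (8:ℝ)/9*9 = (8:ℕ) by norm_num), ← pow_mul, show 8*9 = 9*8 from rfl,
    pow_mul, hβ9]
  norm_num

lemma hc3 : 5040 * (6:ℝ) ^ ((1:ℝ)/3) * (35:ℝ) ^ ((2:ℝ)/3) = 53760 * β ^ 6 := by
  apply pow9_inj
  rw [mul_pow, mul_pow, mul_pow, rp (by norm_num) (show (1:ℝ)/3*9 = (3:ℕ) by norm_num),
    rp (by norm_num) (show (2:ℝ)/3*9 = (6:ℕ) by norm_num), ← pow_mul, show 6*9 = 9*6 from rfl,
    pow_mul, hβ9]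
  norm_num

lemma hc5 : 3024 * (6:ℝ) ^ ((8:ℝ)/9) * (35:ℝ) ^ ((4:ℝ)/9) = 48384 * β ^ 4 := by
  apply pow9_inj
  rw [mul_pow, mul_pow, mul_pow, rp (by norm_num) (show (8:ℝ)/9*9 = (8:ℕ) by norm_num),
    rp (by norm_num) (show (4:ℝ)/9*9 = (4:ℕ) by norm_num), ← pow_mul, show 4*9 = 9*4 from rfl,
    pow_mul, hβ9]
  norm_num

lemma hc7 : 5760 * (6:ℝ) ^ ((4:ℝ)/9) * (35:ℝ) ^ ((2:ℝ)/9) = 23040 * β ^ 2 := by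
  apply pow9_inj
  rw [mul_pow, mul_pow, mul_pow, rp (by norm_num) (show (4:ℝ)/9*9 = (4:ℕ) by norm_num),
    rp (by norm_num) (show (2:ℝ)/9*9 = (2:ℕ) by norm_num), ← pow_mul, show 2*9 = 9*2 from rfl,
    pow_mul, hβ9]
  norm_num

local notation "A" => ((945 * (6 : ℝ) ^ ((7 : ℝ) / 9) * (35 : ℝ) ^ ((8 : ℝ) / 9) : ℝ) : ℂ)
local notation "B" => ((5040 * (6 : ℝ) ^ ((1 : ℝ) / 3) * (35 : ℝ) ^ ((2 : ℝ) / 3) : ℝ) : ℂ)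
local notation "C" => ((3024 * (6 : ℝ) ^ ((8 : ℝ) / 9) * (35 : ℝ) ^ ((4 : ℝ) / 9) : ℝ) : ℂ)
local notation "D" => ((5760 * (6 : ℝ) ^ ((4 : ℝ) / 9) * (35 : ℝ) ^ ((2 : ℝ) / 9) : ℝ) : ℂ)
local notation "b" => ((β : ℝ) : ℂ)

lemma hA : A = 40320 * b ^ 8 := by exact_mod_cast congrArg (Complex.ofReal) hc1
lemma hB : B = 53760 * b ^ 6 := by exact_mod_cast congrArg (Complex.ofReal) hc3
lemma hC : C = 48384 * b ^ 4 := by exact_mod_cast congrArg (Complex.ofReal) hc5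
lemma hD : D = 23040 * b ^ 2 := by exact_mod_cast congrArg (Complex.ofReal) hc7
lemma hb9 : b ^ 9 = 315 / 128 := by rw [← Complex.ofReal_pow, hβ9]; norm_num

lemma hPderiv (z : ℂ) :
    HasDerivAt P ((1 / 80640) * (A - 3 * B * z ^ 2 + 5 * C * z ^ 4
      - 7 * D * z ^ 6 + 40320 * z ^ 8)) z := by
  have h1 : HasDerivAt (fun z : ℂ => A * z) A z := by
    simpa using (hasDerivAt_id z).const_mul A
  have h3 : HasDerivAt (fun z : ℂ => B * z ^ 3) (B * (3 * z ^ 2)) z :=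
    (hasDerivAt_pow 3 z).const_mul B
  have h5 : HasDerivAt (fun z : ℂ => C * z ^ 5) (C * (5 * z ^ 4)) z :=
    (hasDerivAt_pow 5 z).const_mul C
  have h7 : HasDerivAt (fun z : ℂ => D * z ^ 7) (D * (7 * z ^ 6)) z :=
    (hasDerivAt_pow 7 z).const_mul D
  have h9 : HasDerivAt (fun z : ℂ => (4480 : ℂ) * z ^ 9) (4480 * (9 * z ^ 8)) z :=
    (hasDerivAt_pow 9 z).const_mul 4480
  have h0 : HasDerivAt (fun _ : ℂ => (40320 : ℂ)) 0 z := hasDerivAt_const z 40320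
  have := ((((((h0.add h1).sub h3).add h5).sub h7).add h9).const_mul ((1 : ℂ) / 80640))
  exact this.congr_deriv (by ring)

lemma hderiv (z : ℂ) : deriv P z = (1 / 2) * (z ^ 2 - b ^ 2) ^ 4 := by
  rw [(hPderiv z).deriv, hA, hB, hC, hD]
  ring

/-- `Q = deriv P`. -/
def Q : ℂ → ℂ := fun z => (1 / 2) * (z ^ 2 - b ^ 2) ^ 4
def Q1 : ℂ → ℂ := fun z => 4 * z ^ 7 - 12 * b ^ 2 * z ^ 5 + 12 * b ^ 4 * z ^ 3 - 4 * b ^ 6 * z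
def Q2 : ℂ → ℂ := fun z => 28 * z ^ 6 - 60 * b ^ 2 * z ^ 4 + 36 * b ^ 4 * z ^ 2 - 4 * b ^ 6
def Q3 : ℂ → ℂ := fun z => 168 * z ^ 5 - 240 * b ^ 2 * z ^ 3 + 72 * b ^ 4 * z
def Q4 : ℂ → ℂ := fun z => 840 * z ^ 4 - 720 * b ^ 2 * z ^ 2 + 72 * b ^ 4

lemma hPQ : deriv P = Q := funext hderiv

lemma hQd : deriv Q = Q1 := by
  funext z
  have h : HasDerivAt Q ((1/2 : ℂ) * (4 * (z ^ 2 - b ^ 2) ^ 3 * (2 * z))) z := by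
    have := (((hasDerivAt_pow 2 z).sub_const (b ^ 2)).pow 4).const_mul ((1:ℂ)/2)
    exact this.congr_deriv (by ring)
  rw [h.deriv, Q1]
  ring

lemma hQ1d : deriv Q1 = Q2 := by
  funext z
  have h1 := ((hasDerivAt_pow 7 z).const_mul (4:ℂ))
  have h2 := ((hasDerivAt_pow 5 z).const_mul (12 * b ^ 2))
  have h3 := ((hasDerivAt_pow 3 z).const_mul (12 * b ^ 4))
  have h4 : HasDerivAt (fun z : ℂ => 4 * b ^ 6 * z) (4 * b ^ 6) z := by
    simpa using (hasDerivAt_id z).const_mul (4 * b ^ 6)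
  simp only [Q2]
  show deriv (fun z : ℂ => 4 * z ^ 7 - 12 * b ^ 2 * z ^ 5 + 12 * b ^ 4 * z ^ 3 - 4 * b ^ 6 * z) z = _
  rw [HasDerivAt.deriv (f := fun z : ℂ => 4 * z ^ 7 - 12 * b ^ 2 * z ^ 5 + 12 * b ^ 4 * z ^ 3 - 4 * b ^ 6 * z) (((h1.sub h2).add h3).sub h4)]
  ring

lemma hQ2d : deriv Q2 = Q3 := by
  funext z
  have h1 := ((hasDerivAt_pow 6 z).const_mul (28:ℂ))
  have h2 := ((hasDerivAt_pow 4 z).const_mul (60 * b ^ 2))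
  have h3 := ((hasDerivAt_pow 2 z).const_mul (36 * b ^ 4))
  simp only [Q3]
  show deriv (fun z : ℂ => 28 * z ^ 6 - 60 * b ^ 2 * z ^ 4 + 36 * b ^ 4 * z ^ 2 - 4 * b ^ 6) z = _
  rw [HasDerivAt.deriv (f := fun z : ℂ => 28 * z ^ 6 - 60 * b ^ 2 * z ^ 4 + 36 * b ^ 4 * z ^ 2 - 4 * b ^ 6) (((h1.sub h2).add h3).sub_const (4 * b ^ 6))]
  ring

lemma hQ3d : deriv Q3 = Q4 := by
  funext z
  have h1 := ((hasDerivAt_pow 5 z).const_mul (168:ℂ))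
  have h2 := ((hasDerivAt_pow 3 z).const_mul (240 * b ^ 2))
  have h3 : HasDerivAt (fun z : ℂ => 72 * b ^ 4 * z) (72 * b ^ 4) z := by
    simpa using (hasDerivAt_id z).const_mul (72 * b ^ 4)
  simp only [Q4]
  show deriv (fun z : ℂ => 168 * z ^ 5 - 240 * b ^ 2 * z ^ 3 + 72 * b ^ 4 * z) z = _
  rw [HasDerivAt.deriv (f := fun z : ℂ => 168 * z ^ 5 - 240 * b ^ 2 * z ^ 3 + 72 * b ^ 4 * z) ((h1.sub h2).add h3)]
  ring

end Stmt18Aux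

open Stmt18Aux in
/-- `β > 0`, `-β` is the unique real root of `315 + 128z⁹ = 0`,
`P'(z) = (1/2)(z² - β²)⁴`, `P(β) = 1`, `P(-β) = 0`; so `P` is a Belyi polynomial with exactly
two critical points `±β`, each a zero of `P'` of order 4, with critical values `1` and `0`. -/
theorem stmt18 :
    0 < β ∧
    (∀ t : ℝ, 315 + 128 * t ^ 9 = 0 ↔ t = -β) ∧
    (∀ z : ℂ, deriv P z = (1 / 2) * (z ^ 2 - ((β : ℂ)) ^ 2) ^ 4) ∧
    P (β : ℂ) = 1 ∧ P (-(β : ℂ)) = 0 ∧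
    (∀ z : ℂ, deriv P z = 0 ↔ (z = (β : ℂ) ∨ z = -(β : ℂ))) ∧
    (∀ z : ℂ, deriv P z = 0 → P z = 0 ∨ P z = 1) ∧
    (∀ z₀ : ℂ, (z₀ = (β : ℂ) ∨ z₀ = -(β : ℂ)) →
      (∀ k : ℕ, 1 ≤ k → k ≤ 4 → iteratedDeriv k P z₀ = 0) ∧ iteratedDeriv 5 P z₀ ≠ 0) := by
  have hbne : ((β : ℝ) : ℂ) ≠ 0 := Complex.ofReal_ne_zero.mpr (ne_of_gt hβpos)
  have hroot : ∀ t : ℝ, 315 + 128 * t ^ 9 = 0 ↔ t = -β := by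
    intro t
    constructor
    · intro h
      apply pow9_inj
      rw [Odd.neg_pow ⟨4, by norm_num⟩, hβ9]
      linarith
    · rintro rfl
      rw [Odd.neg_pow ⟨4, by norm_num⟩, hβ9]
      ring
  have hPβ : P (β : ℂ) = 1 := by
    show (1 / 80640 : ℂ) * _ = 1
    rw [hA, hB, hC, hD]
    linear_combination (16384 / 80640 : ℂ) * hb9
  have hPnegβ : P (-(β : ℂ)) = 0 := by
    show (1 / 80640 : ℂ) * _ = 0
    rw [hA, hB, hC, hD]
    linear_combination (-16384 / 80640 : ℂ) * hb9
  have hzero : ∀ z : ℂ, deriv P z = 0 ↔ (z = (β : ℂ) ∨ z = -(β : ℂ)) := by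
    intro z
    rw [hderiv z]
    rw [mul_eq_zero, pow_eq_zero_iff (by norm_num)]
    constructor
    · rintro (h | h)
      · norm_num at h
      · have : (z - (β:ℂ)) * (z + (β:ℂ)) = 0 := by linear_combination h
        rcases mul_eq_zero.mp this with h' | h'
        · exact Or.inl (by linear_combination h')
        · exact Or.inr (by linear_combination h')
    · rintro (rfl | rfl) <;> [right; right] <;> ring
  refine ⟨hβpos, hroot, hderiv, hPβ, hPnegβ, hzero, ?_, ?_⟩
  · intro z hz
    rcases (hzero z).mp hz with rfl | rfl
    · exact Or.inr hPβ
    · exact Or.inl hPnegβ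
  · intro z₀ hz₀
    have hsq : z₀ ^ 2 = ((β : ℝ) : ℂ) ^ 2 := by
      rcases hz₀ with rfl | rfl <;> ring
    have e1 : iteratedDeriv 1 P = Q := by rw [iteratedDeriv_one, hPQ]
    have e2 : iteratedDeriv 2 P = Q1 := by
      rw [show (2:ℕ) = 1+1 from rfl, iteratedDeriv_succ', hPQ, iteratedDeriv_one, hQd]
    have e3 : iteratedDeriv 3 P = Q2 := by
      rw [show (3:ℕ) = 1+1+1 from rfl, iteratedDeriv_succ', hPQ, iteratedDeriv_succ', hQd,
        iteratedDeriv_one, hQ1d]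
    have e4 : iteratedDeriv 4 P = Q3 := by
      rw [show (4:ℕ) = 1+1+1+1 from rfl, iteratedDeriv_succ', hPQ, iteratedDeriv_succ', hQd,
        iteratedDeriv_succ', hQ1d, iteratedDeriv_one, hQ2d]
    have e5 : iteratedDeriv 5 P = Q4 := by
      rw [show (5:ℕ) = 1+1+1+1+1 from rfl, iteratedDeriv_succ', hPQ, iteratedDeriv_succ', hQd,
        iteratedDeriv_succ', hQ1d, iteratedDeriv_succ', hQ2d, iteratedDeriv_one, hQ3d]
    constructor
    · intro k hk1 hk4
      interval_cases k
      · rw [e1]; simp only [Q]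
        rw [hsq]; ring
      · rw [e2]; simp only [Q1]
        linear_combination (4 * z₀ * (z₀ ^ 2 - ((β:ℝ):ℂ) ^ 2) ^ 2) * hsq
      · rw [e3]; simp only [Q2]
        linear_combination (28 * z₀ ^ 4 - 32 * ((β:ℝ):ℂ) ^ 2 * z₀ ^ 2 + 4 * ((β:ℝ):ℂ) ^ 4) * hsq
      · rw [e4]; simp only [Q3]
        linear_combination (z₀ * (168 * z₀ ^ 2 - 72 * ((β:ℝ):ℂ) ^ 2)) * hsq
    · rw [e5]; simp only [Q4]
      have : (840 : ℂ) * z₀ ^ 4 - 720 * ((β:ℝ):ℂ) ^ 2 * z₀ ^ 2 + 72 * ((β:ℝ):ℂ) ^ 4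
          = 192 * ((β:ℝ):ℂ) ^ 4 := by
        linear_combination (840 * z₀ ^ 2 + 120 * ((β:ℝ):ℂ) ^ 2) * hsq
      rw [this]
      exact mul_ne_zero (by norm_num) (pow_ne_zero _ hbne)
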